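/- Let L be a language with a unary connective ¬ and binary connectives ∨ and ∧, F the set of all wffs of L, and ⟨F, 𝒱, ⊨⟩ a semantic structure satisfying (A3), (A1), and (A2). Let |~ be a relation on P(F) × F. Then |~ is a definability preserving pivotal-discriminative consequence relation if and only if |~ satisfies conditions (|~0), (|~6), (|~7), (|~8), and (|~9). -/

import Mathlib

/-- The set of models of a set of formulas `Γ`. -/
def modSet {F V : Type*} (sat : V → F → Prop) (Γ : Set F) : Set V :=
  {v | ∀ α ∈ Γ, sat v α}

/-- The set of formulas satisfied in every valuation of `S`. -/
def thSet {F V : Type*} (sat : V → F → Prop) (S : Set V) : Set F :=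
  {α | S ⊆ modSet sat {α}}

/-- `D`: the family of definable sets of valuations. -/
def defFam {F V : Type*} (sat : V → F → Prop) : Set (Set V) :=
  {S | ∃ Γ : Set F, modSet sat Γ = S}

/-- The basic consequence operator `C_⊢(Γ) = Th(Mod(Γ))`. -/
def cnsq {F V : Type*} (sat : V → F → Prop) (Γ : Set F) : Set F :=
  thSet sat (modSet sat Γ)

/-- `C_|~(Γ) = {α | Γ |~ α}`. -/
def relC {F : Type*} (rel : Set F → F → Prop) (Γ : Set F) : Set F :=
  {α | rel Γ α}

/-- `𝐂`: the sets of valuations that do not satisfy both a formula and its negation. -/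
def coFam {F V : Type*} (sat : V → F → Prop) (neg : F → F) : Set (Set V) :=
  {S | ∀ α, ¬(S ⊆ modSet sat {α} ∧ S ⊆ modSet sat {neg α})}

/-- `Γ` is consistent: for no `α` do we have both `Γ ⊢ α` and `Γ ⊢ ¬α`. -/
def isConsistent {F V : Type*} (sat : V → F → Prop) (neg : F → F) (Γ : Set F) : Prop :=
  ∀ α, ¬(modSet sat Γ ⊆ modSet sat {α} ∧ modSet sat Γ ⊆ modSet sat {neg α})

/-- One step of the inductive construction of the sets `H_i(Γ)`:
`hStep … Γ B = {¬β : β ∈ C_⊢(B) \ C_|~(Γ) and ¬β ∉ C_⊢(B)}`. -/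
def hStep {F V : Type*} (sat : V → F → Prop) (neg : F → F)
    (rel : Set F → F → Prop) (Γ B : Set F) : Set F :=
  {x | ∃ β, x = neg β ∧ β ∈ cnsq sat B ∧ β ∉ relC rel Γ ∧ neg β ∉ cnsq sat B}

/-- `hPrev … Γ n = Γ ∪ C_|~(Γ) ∪ H_1(Γ) ∪ … ∪ H_n(Γ)`. -/
def hPrev {F V : Type*} (sat : V → F → Prop) (neg : F → F)
    (rel : Set F → F → Prop) (Γ : Set F) : ℕ → Set F
  | 0 => Γ ∪ relC rel Γ
  | n + 1 => hPrev sat neg rel Γ n ∪ hStep sat neg rel Γ (hPrev sat neg rel Γ n)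

/-- `H(Γ) = ⋃_{i ≥ 1} H_i(Γ)`, where `H_{n+1}(Γ) = hStep … Γ (hPrev … Γ n)`. -/
def hSet {F V : Type*} (sat : V → F → Prop) (neg : F → F)
    (rel : Set F → F → Prop) (Γ : Set F) : Set F :=
  ⋃ n : ℕ, hStep sat neg rel Γ (hPrev sat neg rel Γ n)

/-- Assumption `(A2)`. -/
def assumpA2 {F V : Type*} (sat : V → F → Prop) (neg : F → F) : Prop :=
  ∀ (Γ : Set F) (α : F), α ∉ cnsq sat Γ → neg α ∉ cnsq sat Γ →
    ¬(modSet sat Γ ∩ modSet sat {α} ⊆ modSet sat {neg α})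

/-- Assumption `(A3)`. -/
def assumpA3 {F V : Type*} (sat : V → F → Prop) (neg : F → F)
    (disj conj : F → F → F) : Prop :=
  ∀ α β : F,
    modSet sat {disj α β} = modSet sat {α} ∪ modSet sat {β} ∧
    modSet sat {conj α β} = modSet sat {α} ∩ modSet sat {β} ∧
    modSet sat {neg (neg α)} = modSet sat {α} ∧
    modSet sat {neg (disj α β)} = modSet sat {conj (neg α) (neg β)} ∧
    modSet sat {neg (conj α β)} = modSet sat {disj (neg α) (neg β)}

/-- Condition `(|~0)`. -/
def cond0 {F V : Type*} (sat : V → F → Prop) (rel : Set F → F → Prop) : Prop :=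
  ∀ Γ Δ : Set F, cnsq sat Γ = cnsq sat Δ → relC rel Γ = relC rel Δ

/-- Condition `(|~6)`. -/
def cond6 {F V : Type*} (sat : V → F → Prop) (neg : F → F)
    (rel : Set F → F → Prop) : Prop :=
  ∀ (Γ : Set F) (α β : F),
    β ∈ cnsq sat (Γ ∪ relC rel Γ) → β ∉ relC rel Γ →
    neg α ∈ cnsq sat (Γ ∪ relC rel Γ ∪ {neg β}) → α ∉ relC rel Γ

/-- Condition `(|~7)`. -/
def cond7 {F V : Type*} (sat : V → F → Prop) (neg : F → F) (disj : F → F → F)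
    (rel : Set F → F → Prop) : Prop :=
  ∀ (Γ : Set F) (α β : F),
    α ∈ cnsq sat (Γ ∪ relC rel Γ) → α ∉ relC rel Γ →
    β ∈ cnsq sat (Γ ∪ relC rel Γ ∪ {neg α}) → β ∉ relC rel Γ →
    disj α β ∉ relC rel Γ

/-- Condition `(|~8)`. -/
def cond8 {F V : Type*} (sat : V → F → Prop) (neg : F → F)
    (rel : Set F → F → Prop) : Prop :=
  ∀ (Γ : Set F) (α : F), α ∈ relC rel Γ → neg α ∉ cnsq sat (Γ ∪ relC rel Γ)

/-- Condition `(|~9)`. -/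
def cond9 {F V : Type*} (sat : V → F → Prop) (neg : F → F)
    (rel : Set F → F → Prop) : Prop :=
  ∀ Γ Δ : Set F, relC rel Γ ∪ hSet sat neg rel Γ ⊆
    cnsq sat (Δ ∪ relC rel Δ ∪ hSet sat neg rel Δ ∪ Γ)

/-- Condition `(|~10)`. -/
def cond10 {F V : Type*} (sat : V → F → Prop) (neg : F → F)
    (rel : Set F → F → Prop) : Prop :=
  ∀ Γ : Set F, isConsistent sat neg Γ →
    isConsistent sat neg (relC rel Γ) ∧ Γ ⊆ relC rel Γ ∧
      cnsq sat (relC rel Γ) = relC rel Γ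

/-- Condition `(|~11)`. -/
def cond11 {F V : Type*} (sat : V → F → Prop) (neg : F → F)
    (rel : Set F → F → Prop) : Prop :=
  ∀ Γ : Set F, cnsq sat (Γ ∪ relC rel Γ ∪ hSet sat neg rel Γ) =
    thSet sat {v ∈ modSet sat Γ | ∀ Δ : Set F, v ∈ modSet sat Δ →
      v ∈ modSet sat (relC rel Δ ∪ hSet sat neg rel Δ)}

/-- Condition `(|~12)`. -/
def cond12 {F V : Type*} (sat : V → F → Prop) (neg : F → F)
    (rel : Set F → F → Prop) : Prop :=
  Set.univ \ {v : V | ∀ Δ : Set F, v ∈ modSet sat Δ →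
    v ∈ modSet sat (relC rel Δ ∪ hSet sat neg rel Δ)} ∈ defFam sat

section Basics

variable {F V : Type*} (sat : V → F → Prop) (neg : F → F) (rel : Set F → F → Prop)

lemma mem_modSet_singleton {v : V} {α : F} : v ∈ modSet sat {α} ↔ sat v α := by
  simp [modSet]

lemma mem_cnsq {α : F} {Γ : Set F} :
    α ∈ cnsq sat Γ ↔ modSet sat Γ ⊆ modSet sat {α} := Iff.rfl

lemma modSet_union (A B : Set F) :
    modSet sat (A ∪ B) = modSet sat A ∩ modSet sat B := by
  ext v; simp [modSet, or_imp, forall_and]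

lemma modSet_anti {A B : Set F} (h : A ⊆ B) : modSet sat B ⊆ modSet sat A :=
  fun v hv a ha => hv a (h ha)

lemma modSet_subset_of_mem {Γ : Set F} {α : F} (h : α ∈ Γ) :
    modSet sat Γ ⊆ modSet sat {α} := fun v hv => by
  rw [mem_modSet_singleton]; exact hv α h

lemma subset_cnsq {Γ : Set F} : Γ ⊆ cnsq sat Γ :=
  fun α hα => modSet_subset_of_mem sat hα

lemma modSet_cnsq (Γ : Set F) : modSet sat (cnsq sat Γ) = modSet sat Γ := by
  apply subset_antisymm (modSet_anti sat (subset_cnsq sat))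
  intro v hv φ hφ
  exact (mem_modSet_singleton sat).mp (hφ hv)

lemma cnsq_congr {A B : Set F} (h : modSet sat A = modSet sat B) :
    cnsq sat A = cnsq sat B := by unfold cnsq; rw [h]

lemma modSet_eq_of_cnsq_eq {A B : Set F} (h : cnsq sat A = cnsq sat B) :
    modSet sat A = modSet sat B := by
  rw [← modSet_cnsq sat A, ← modSet_cnsq sat B, h]

lemma hStep_congr {Γ B B' : Set F} (h : cnsq sat B = cnsq sat B') :
    hStep sat neg rel Γ B = hStep sat neg rel Γ B' := by
  unfold hStep; rw [h]

lemma modSet_hPrev_succ (Γ : Set F) (n : ℕ) :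
    modSet sat (hPrev sat neg rel Γ (n + 1)) =
      modSet sat (hPrev sat neg rel Γ n) ∩
        modSet sat (hStep sat neg rel Γ (hPrev sat neg rel Γ n)) := by
  rw [show hPrev sat neg rel Γ (n+1) = hPrev sat neg rel Γ n ∪
    hStep sat neg rel Γ (hPrev sat neg rel Γ n) from rfl, modSet_union]

lemma hPrev_mono (Γ : Set F) : ∀ {m n : ℕ}, m ≤ n →
    hPrev sat neg rel Γ m ⊆ hPrev sat neg rel Γ n := by
  intro m n h
  induction n with
  | zero => rw [Nat.le_zero.mp h]
  | succ n ih =>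
    rcases Nat.lt_or_ge m (n+1) with h'|h'
    · exact (ih (Nat.lt_succ_iff.mp h')).trans Set.subset_union_left
    · rw [Nat.le_antisymm h h']

lemma modSet_hPrev_anti (Γ : Set F) {m n : ℕ} (h : m ≤ n) :
    modSet sat (hPrev sat neg rel Γ n) ⊆ modSet sat (hPrev sat neg rel Γ m) :=
  modSet_anti sat (hPrev_mono sat neg rel Γ h)

lemma hPrev_subset_total (Γ : Set F) (n : ℕ) :
    hPrev sat neg rel Γ n ⊆ Γ ∪ relC rel Γ ∪ hSet sat neg rel Γ := by
  induction n with
  | zero => exact Set.subset_union_left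
  | succ n ih =>
    apply Set.union_subset ih
    exact (Set.subset_iUnion (fun k => hStep sat neg rel Γ (hPrev sat neg rel Γ k)) n).trans
      Set.subset_union_right

lemma modSet_total_eq_iInter (Γ : Set F) :
    modSet sat (Γ ∪ relC rel Γ ∪ hSet sat neg rel Γ) =
      ⋂ n : ℕ, modSet sat (hPrev sat neg rel Γ n) := by
  apply subset_antisymm
  · exact Set.subset_iInter fun n => modSet_anti sat (hPrev_subset_total sat neg rel Γ n)
  · intro v hv
    rw [Set.mem_iInter] at hv
    intro φ hφ
    rcases hφ with hφ | hφ
    · exact hv 0 φ hφ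
    · rcases Set.mem_iUnion.mp hφ with ⟨n, hn⟩
      exact hv (n+1) φ (Set.mem_union_right _ hn)

end Basics
section Stab

variable {F V : Type*} (sat : V → F → Prop) (neg : F → F) (rel : Set F → F → Prop)

lemma stab_step {Γ : Set F} {k : ℕ}
    (h : modSet sat (hPrev sat neg rel Γ (k+1)) = modSet sat (hPrev sat neg rel Γ k)) :
    modSet sat (hPrev sat neg rel Γ (k+2)) = modSet sat (hPrev sat neg rel Γ (k+1)) := by
  rw [modSet_hPrev_succ sat neg rel Γ (k+1),
    hStep_congr sat neg rel (cnsq_congr sat h), h, ← modSet_hPrev_succ sat neg rel Γ k, h]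

lemma exists_stab [Finite V] (Γ : Set F) :
    ∃ n₀ : ℕ, ∀ m : ℕ, n₀ ≤ m →
      modSet sat (hPrev sat neg rel Γ m) = modSet sat (hPrev sat neg rel Γ n₀) := by
  set f : ℕ → ℕ := fun n => (modSet sat (hPrev sat neg rel Γ n)).ncard with hf
  have hanti : ∀ n, f (n+1) ≤ f n := fun n =>
    Set.ncard_le_ncard (modSet_hPrev_anti sat neg rel Γ (Nat.le_succ n)) (Set.toFinite _)
  have hcons : ∃ n₀, f (n₀ + 1) = f n₀ := by
    by_contra hno
    push_neg at hno
    have hlt : ∀ n, f (n+1) < f n := fun n => lt_of_le_of_ne (hanti n) (hno n)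
    have key : ∀ n, f n + n ≤ f 0 := by
      intro n
      induction n with
      | zero => simp
      | succ n ih => have := hlt n; omega
    have := key (f 0 + 1); omega
  obtain ⟨n₀, hn₀⟩ := hcons
  have hbase : modSet sat (hPrev sat neg rel Γ (n₀+1)) = modSet sat (hPrev sat neg rel Γ n₀) :=
    Set.eq_of_subset_of_ncard_le (modSet_hPrev_anti sat neg rel Γ (Nat.le_succ n₀))
      (le_of_eq hn₀.symm) (Set.toFinite _)
  have hall : ∀ j : ℕ, modSet sat (hPrev sat neg rel Γ (n₀+j+1)) =
      modSet sat (hPrev sat neg rel Γ (n₀+j)) := by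
    intro j
    induction j with
    | zero => exact hbase
    | succ j ih => exact stab_step sat neg rel ih
  refine ⟨n₀, fun m hm => ?_⟩
  obtain ⟨j, rfl⟩ := Nat.exists_eq_add_of_le hm
  induction j with
  | zero => rfl
  | succ j ih => rw [show n₀ + (j+1) = n₀ + j + 1 from rfl, hall j, ih (by omega)]

/-- At a stabilization point, the fixed-point property of `hStep` holds. -/
lemma fixed_point {Γ : Set F} {n₀ : ℕ}
    (hstab : ∀ m : ℕ, n₀ ≤ m →
      modSet sat (hPrev sat neg rel Γ m) = modSet sat (hPrev sat neg rel Γ n₀))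
    {β : F} (hβ : β ∈ cnsq sat (hPrev sat neg rel Γ n₀)) (hβr : β ∉ relC rel Γ) :
    neg β ∈ cnsq sat (hPrev sat neg rel Γ n₀) := by
  by_contra hnβ
  have hmem : neg β ∈ hPrev sat neg rel Γ (n₀ + 1) :=
    Set.mem_union_right _ ⟨β, rfl, hβ, hβr, hnβ⟩
  have : modSet sat (hPrev sat neg rel Γ n₀) ⊆ modSet sat {neg β} := by
    rw [← hstab (n₀+1) (Nat.le_succ n₀)]
    exact modSet_subset_of_mem sat hmem
  exact hnβ this

lemma modSet_total_eq_stab {Γ : Set F} {n₀ : ℕ}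
    (hstab : ∀ m : ℕ, n₀ ≤ m →
      modSet sat (hPrev sat neg rel Γ m) = modSet sat (hPrev sat neg rel Γ n₀)) :
    modSet sat (Γ ∪ relC rel Γ ∪ hSet sat neg rel Γ) =
      modSet sat (hPrev sat neg rel Γ n₀) := by
  rw [modSet_total_eq_iInter]
  apply subset_antisymm (Set.iInter_subset _ n₀)
  apply Set.subset_iInter
  intro n
  rcases Nat.lt_or_ge n n₀ with h|h
  · exact (modSet_hPrev_anti sat neg rel Γ h.le).trans' (by rfl)
  · rw [hstab n h]

end Stab
section Conn

variable {F V : Type*} {sat : V → F → Prop} {neg : F → F} {disj conj : F → F → F}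
  {rel : Set F → F → Prop}

lemma foldr_conj_subset (hA3 : assumpA3 sat neg disj conj) (a : F) (l : List F)
    {b : F} (h : b = a ∨ b ∈ l) :
    modSet sat {List.foldr conj a l} ⊆ modSet sat {b} := by
  induction l with
  | nil =>
    rcases h with rfl|h
    · rfl
    · simp at h
  | cons c l ih =>
    have hsplit : modSet sat {List.foldr conj a (c :: l)} =
        modSet sat {c} ∩ modSet sat {List.foldr conj a l} := by
      rw [show List.foldr conj a (c :: l) = conj c (List.foldr conj a l) from rfl]
      exact (hA3 c (List.foldr conj a l)).2.1
    rw [hsplit]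
    rcases h with rfl|h
    · exact Set.inter_subset_right.trans (ih (Or.inl rfl))
    · rcases List.mem_cons.mp h with rfl|h
      · exact Set.inter_subset_left
      · exact Set.inter_subset_right.trans (ih (Or.inr h))

lemma mem_foldr_conj (hA3 : assumpA3 sat neg disj conj) {a : F} {l : List F} {v : V}
    (ha : v ∈ modSet sat {a}) (hl : ∀ b ∈ l, v ∈ modSet sat {b}) :
    v ∈ modSet sat {List.foldr conj a l} := by
  induction l with
  | nil => exact ha
  | cons c l ih =>
    have hsplit : modSet sat {List.foldr conj a (c :: l)} =
        modSet sat {c} ∩ modSet sat {List.foldr conj a l} :=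
      (hA3 c (List.foldr conj a l)).2.1
    rw [hsplit]
    exact ⟨hl c (List.mem_cons_self), ih fun b hb => hl b (List.mem_cons_of_mem c hb)⟩

lemma subset_neg_foldr (hA3 : assumpA3 sat neg disj conj) (a : F) (l : List F)
    {b : F} (h : b = a ∨ b ∈ l) :
    modSet sat {neg b} ⊆ modSet sat {neg (List.foldr conj a l)} := by
  induction l with
  | nil =>
    rcases h with rfl|h
    · rfl
    · simp at h
  | cons c l ih =>
    have hsplit : modSet sat {neg (List.foldr conj a (c :: l))} =
        modSet sat {neg c} ∪ modSet sat {neg (List.foldr conj a l)} := by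
      rw [show List.foldr conj a (c :: l) = conj c (List.foldr conj a l) from rfl,
        (hA3 c (List.foldr conj a l)).2.2.2.2, (hA3 (neg c) (neg (List.foldr conj a l))).1]
    rw [hsplit]
    rcases h with rfl|h
    · exact (ih (Or.inl rfl)).trans Set.subset_union_right
    · rcases List.mem_cons.mp h with rfl|h
      · exact Set.subset_union_left
      · exact (ih (Or.inr h)).trans Set.subset_union_right

/-- From any (possibly infinite) family of formulas, extract a list whose members
realize all model-sets of the family (uses finiteness of `V`). -/
lemma subcover [Finite V] (T : Set F) (f : F → Set V) :
    ∃ L : List F, (∀ b ∈ L, b ∈ T) ∧ ∀ β ∈ T, ∃ b ∈ L, f b = f β := by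
  classical
  have hfin : (f '' T).Finite := Set.toFinite _
  refine ⟨hfin.toFinset.toList.filterMap
    (fun s => if h : ∃ b, b ∈ T ∧ f b = s then some h.choose else none), ?_, ?_⟩
  · intro b hb
    rcases List.mem_filterMap.mp hb with ⟨s, _, hs⟩
    have hs' : (if h : ∃ b, b ∈ T ∧ f b = s then some h.choose else none) = some b := hs
    by_cases h : ∃ b, b ∈ T ∧ f b = s
    · rw [dif_pos h] at hs'; cases hs'; exact h.choose_spec.1
    · rw [dif_neg h] at hs'; cases hs'
  · intro β hβ
    have hmem : f β ∈ hfin.toFinset.toList := by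
      rw [Finset.mem_toList, Set.Finite.mem_toFinset]
      exact ⟨β, hβ, rfl⟩
    have h : ∃ b, b ∈ T ∧ f b = f β := ⟨β, hβ, rfl⟩
    refine ⟨h.choose, List.mem_filterMap.mpr ⟨f β, hmem, ?_⟩, h.choose_spec.2⟩
    exact dif_pos h

/-- The chain lemma: extend a "bad disjunct" `δ` by a list of formulas using `(|~7)`. -/
lemma chain (hA3 : assumpA3 sat neg disj conj) (h7 : cond7 sat neg disj rel) (Γ : Set F) :
    ∀ (L : List F) (δ : F), δ ∈ cnsq sat (Γ ∪ relC rel Γ) → δ ∉ relC rel Γ →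
    (∀ β ∈ L, (modSet sat (Γ ∪ relC rel Γ) ∩ modSet sat {neg δ} ⊆ modSet sat {β}) ∧
      β ∉ relC rel Γ) →
    ∃ δ', δ' ∈ cnsq sat (Γ ∪ relC rel Γ) ∧ δ' ∉ relC rel Γ ∧
      (modSet sat (Γ ∪ relC rel Γ) ∩ modSet sat {neg δ'} ⊆
        modSet sat (Γ ∪ relC rel Γ) ∩ modSet sat {neg δ}) ∧
      ∀ β ∈ L, modSet sat (Γ ∪ relC rel Γ) ∩ modSet sat {neg δ'} ⊆ modSet sat {neg β} := by
  intro L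
  induction L with
  | nil => exact fun δ h1 h2 _ => ⟨δ, h1, h2, le_refl _, by simp⟩
  | cons β L ih =>
    intro δ hδ hδr hL
    have hβ := hL β (List.mem_cons_self)
    have hβc : β ∈ cnsq sat (Γ ∪ relC rel Γ ∪ {neg δ}) := by
      rw [mem_cnsq, modSet_union]
      exact hβ.1
    have hdisj : disj δ β ∉ relC rel Γ := h7 Γ δ β hδ hδr hβc hβ.2
    have hdisjc : disj δ β ∈ cnsq sat (Γ ∪ relC rel Γ) := by
      rw [mem_cnsq]
      refine hδ.trans ?_
      rw [(hA3 δ β).1]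
      exact Set.subset_union_left
    have hnegdisj : modSet sat {neg (disj δ β)} =
        modSet sat {neg δ} ∩ modSet sat {neg β} := by
      rw [(hA3 δ β).2.2.2.1, (hA3 (neg δ) (neg β)).2.1]
    obtain ⟨δ', h1, h2, h3, h4⟩ := ih (disj δ β) hdisjc hdisj (by
      intro γ hγ
      refine ⟨?_, (hL γ (List.mem_cons_of_mem β hγ)).2⟩
      refine Set.Subset.trans ?_ (hL γ (List.mem_cons_of_mem β hγ)).1
      rw [hnegdisj]
      exact Set.inter_subset_inter_right _ Set.inter_subset_left)
    have hsub : modSet sat (Γ ∪ relC rel Γ) ∩ modSet sat {neg δ'} ⊆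
        modSet sat (Γ ∪ relC rel Γ) ∩ (modSet sat {neg δ} ∩ modSet sat {neg β}) := by
      rw [← hnegdisj]; exact h3
    refine ⟨δ', h1, h2, ?_, ?_⟩
    · exact hsub.trans (Set.inter_subset_inter_right _ Set.inter_subset_left)
    · intro γ hγ
      rcases List.mem_cons.mp hγ with rfl|hγ
      · exact hsub.trans ((Set.inter_subset_right).trans Set.inter_subset_right)
      · exact h4 γ hγ

end Conn
section Backward

variable {F V : Type*} {sat : V → F → Prop} {neg : F → F} {disj conj : F → F → F}
  {rel : Set F → F → Prop}

lemma modSet_hStep (Γ B : Set F) {v : V} :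
    v ∈ modSet sat (hStep sat neg rel Γ B) ↔
      ∀ β : F, β ∈ cnsq sat B → β ∉ relC rel Γ → neg β ∉ cnsq sat B →
        v ∈ modSet sat {neg β} := by
  constructor
  · intro hv β h1 h2 h3
    rw [mem_modSet_singleton]
    exact hv (neg β) ⟨β, rfl, h1, h2, h3⟩
  · rintro hv x ⟨β, rfl, h1, h2, h3⟩
    exact (mem_modSet_singleton sat).mp (hv β h1 h2 h3)

/-- The key inductive claim for the backward direction. -/
lemma claim [Finite V] (hA3 : assumpA3 sat neg disj conj)
    (h7 : cond7 sat neg disj rel) (Γ : Set F) (n : ℕ) :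
    modSet sat (hPrev sat neg rel Γ n) = modSet sat (Γ ∪ relC rel Γ) ∨
    ∃ δ, δ ∈ cnsq sat (Γ ∪ relC rel Γ) ∧ δ ∉ relC rel Γ ∧
      modSet sat (Γ ∪ relC rel Γ) ∩ modSet sat {neg δ} ⊆
        modSet sat (hPrev sat neg rel Γ n) := by
  induction n with
  | zero => exact Or.inl rfl
  | succ n ih =>
    set B := hPrev sat neg rel Γ n with hB
    set T : Set F := {β | β ∈ cnsq sat B ∧ β ∉ relC rel Γ ∧ neg β ∉ cnsq sat B} with hT
    obtain ⟨L, hL1, hL2⟩ := subcover T (fun β => modSet sat ({neg β} : Set F))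
    have hLsub : ∀ v : V, (∀ b ∈ L, v ∈ modSet sat {neg b}) →
        v ∈ modSet sat (hStep sat neg rel Γ B) := by
      intro v hv
      rw [modSet_hStep]
      intro β h1 h2 h3
      obtain ⟨b, hbL, hbe⟩ := hL2 β ⟨h1, h2, h3⟩
      rw [← hbe]
      exact hv b hbL
    rcases ih with heq | ⟨δ, hδ1, hδ2, hδ3⟩
    · -- previous level is all of Y
      rcases L with _ | ⟨b₀, L'⟩
      · -- T is empty
        left
        rw [modSet_hPrev_succ, ← hB, heq]
        apply subset_antisymm Set.inter_subset_left
        intro v hv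
        exact ⟨hv, hLsub v (by simp)⟩
      · right
        have hcnsq : cnsq sat B = cnsq sat (Γ ∪ relC rel Γ) := cnsq_congr sat heq
        have hb₀T : b₀ ∈ T := hL1 b₀ (List.mem_cons_self)
        have hb₀c : b₀ ∈ cnsq sat (Γ ∪ relC rel Γ) := by
          rw [← hcnsq]; exact hb₀T.1
        obtain ⟨δ', h1, h2, h3, h4⟩ := chain hA3 h7 Γ (b₀ :: L') b₀ hb₀c hb₀T.2.1 (by
          intro β hβ
          have hβT : β ∈ T := hL1 β hβ
          refine ⟨?_, hβT.2.1⟩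
          have : modSet sat (Γ ∪ relC rel Γ) ⊆ modSet sat {β} := by
            have := hβT.1; rw [mem_cnsq, heq] at this; exact this
          exact Set.inter_subset_left.trans this)
        refine ⟨δ', h1, h2, ?_⟩
        rw [modSet_hPrev_succ, ← hB, heq]
        intro v hv
        exact ⟨(h3 hv).1, hLsub v fun b hb => h4 b hb hv⟩
    · right
      obtain ⟨δ', h1, h2, h3, h4⟩ := chain hA3 h7 Γ L δ hδ1 hδ2 (by
        intro β hβ
        have hβT : β ∈ T := hL1 β hβ
        exact ⟨hδ3.trans hβT.1, hβT.2.1⟩)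
      refine ⟨δ', h1, h2, ?_⟩
      rw [modSet_hPrev_succ, ← hB]
      intro v hv
      exact ⟨hδ3 (h3 hv), hLsub v fun b hb => h4 b hb hv⟩

/-- Backward representation: under the conditions, `rel Γ α` is captured by the
definable set `Mod(Γ ∪ C(Γ) ∪ H(Γ))`. -/
lemma back_repr [Finite V] (hA3 : assumpA3 sat neg disj conj)
    (h6 : cond6 sat neg rel) (h7 : cond7 sat neg disj rel) (h8 : cond8 sat neg rel)
    (Γ : Set F) (α : F) :
    rel Γ α ↔ (modSet sat (Γ ∪ relC rel Γ ∪ hSet sat neg rel Γ) ⊆ modSet sat {α} ∧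
      ¬ modSet sat (Γ ∪ relC rel Γ ∪ hSet sat neg rel Γ) ⊆ modSet sat {neg α}) := by
  obtain ⟨n₀, hstab⟩ := exists_stab sat neg rel Γ
  have hX : modSet sat (Γ ∪ relC rel Γ ∪ hSet sat neg rel Γ) =
      modSet sat (hPrev sat neg rel Γ n₀) := modSet_total_eq_stab sat neg rel hstab
  constructor
  · intro hα
    constructor
    · rw [hX]
      exact (modSet_hPrev_anti sat neg rel Γ (Nat.zero_le n₀)).trans
        (modSet_subset_of_mem sat (Set.mem_union_right _ hα))
    · rw [hX]
      intro hcon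
      rcases claim hA3 h7 Γ n₀ with heq | ⟨δ, hδ1, hδ2, hδ3⟩
      · refine h8 Γ α hα ?_
        rw [mem_cnsq, ← heq]
        exact hcon
      · refine h6 Γ α δ hδ1 hδ2 ?_ hα
        rw [mem_cnsq, modSet_union]
        exact (hδ3.trans hcon)
  · rintro ⟨h1, h2⟩
    rw [hX] at h1 h2
    by_contra hα
    by_cases hnα : neg α ∈ cnsq sat (hPrev sat neg rel Γ n₀)
    · exact h2 hnα
    · apply h2
      apply fixed_point sat neg rel hstab h1 hα
end Backward
section Forward

variable {F V : Type*} {sat : V → F → Prop} {neg : F → F} {disj conj : F → F → F}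
  {rel : Set F → F → Prop}

/-- Forward direction key lemma: if `rel` is represented by a DP strongly coherent
choice function `μ`, then `Mod(Γ ∪ C(Γ) ∪ H(Γ)) = μ(Mod(Γ))`. -/
lemma forward_main [Finite V] (hA3 : assumpA3 sat neg disj conj) (hA2 : assumpA2 sat neg)
    (μ : Set V → Set V)
    (hch : ∀ A ∈ defFam sat, μ A ⊆ A)
    (hdp : ∀ A ∈ defFam sat, μ A ∈ defFam sat)
    (hrepr : ∀ (Γ : Set F) (α : F), rel Γ α ↔
      (μ (modSet sat Γ) ⊆ modSet sat {α} ∧ ¬ μ (modSet sat Γ) ⊆ modSet sat {neg α}))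
    (Γ : Set F) :
    modSet sat (Γ ∪ relC rel Γ ∪ hSet sat neg rel Γ) = μ (modSet sat Γ) := by
  classical
  set W := μ (modSet sat Γ) with hWdefn
  have hWdef : modSet sat Γ ∈ defFam sat := ⟨Γ, rfl⟩
  have hWsub : W ⊆ modSet sat Γ := hch _ hWdef
  have hWrel : ∀ φ ∈ relC rel Γ, W ⊆ modSet sat {φ} := fun φ h => ((hrepr Γ φ).mp h).1
  have hWneg : ∀ φ, φ ∉ relC rel Γ → W ⊆ modSet sat {φ} → W ⊆ modSet sat {neg φ} := by
    intro φ h1 h2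
    by_contra h3
    exact h1 ((hrepr Γ φ).mpr ⟨h2, h3⟩)
  have hWprev : ∀ n, W ⊆ modSet sat (hPrev sat neg rel Γ n) := by
    intro n
    induction n with
    | zero =>
      intro w hw φ hφ
      rcases hφ with hφ | hφ
      · exact hWsub hw φ hφ
      · exact (mem_modSet_singleton sat).mp (hWrel φ hφ hw)
    | succ n ih =>
      rw [modSet_hPrev_succ]
      intro w hw
      refine ⟨ih hw, ?_⟩
      rw [modSet_hStep]
      intro β h1 h2 _
      exact hWneg β h2 (ih.trans h1) hw
  obtain ⟨n₀, hstab⟩ := exists_stab sat neg rel Γ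
  rw [modSet_total_eq_stab sat neg rel hstab]
  refine subset_antisymm ?_ (hWprev n₀)
  -- the hard inclusion `X ⊆ W`
  by_contra hcon
  rw [Set.not_subset] at hcon
  obtain ⟨v, hvX, hvW⟩ := hcon
  obtain ⟨Sg, hSg⟩ := hdp _ hWdef
  have hexv : ∃ σ, σ ∈ Sg ∧ ¬ sat v σ := by
    by_contra hno
    push_neg at hno
    exact hvW (by rw [hWdefn, ← hSg]; intro σ hσ; exact hno σ hσ)
  haveI : Nonempty F := ⟨hexv.choose⟩
  have hchoice : ∀ u : V, ∃ σ : F,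
      u ∈ modSet sat (hPrev sat neg rel Γ n₀) → u ∉ W → (σ ∈ Sg ∧ ¬ sat u σ) := by
    intro u
    by_cases hu : u ∈ modSet sat (hPrev sat neg rel Γ n₀) ∧ u ∉ W
    · have hex : ∃ σ, σ ∈ Sg ∧ ¬ sat u σ := by
        by_contra hno
        push_neg at hno
        exact hu.2 (by rw [hWdefn, ← hSg]; intro σ hσ; exact hno σ hσ)
      exact ⟨hex.choose, fun _ _ => hex.choose_spec⟩
    · exact ⟨Classical.arbitrary F, fun h1 h2 => absurd ⟨h1, h2⟩ hu⟩
  choose g hg using hchoice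
  set ul : List V := ({u | u ∈ modSet sat (hPrev sat neg rel Γ n₀) ∧ u ∉ W}).toFinite.toFinset.toList
    with huldef
  have hul : ∀ u : V, u ∈ ul ↔
      (u ∈ modSet sat (hPrev sat neg rel Γ n₀) ∧ u ∉ W) := by
    intro u
    rw [huldef, Finset.mem_toList, Set.Finite.mem_toFinset]
    rfl
  set τ : F := List.foldr conj (g v) (ul.map g) with hτdef
  have hcomp : ∀ b, (b = g v ∨ b ∈ ul.map g) →
      ∃ u, (u ∈ modSet sat (hPrev sat neg rel Γ n₀) ∧ u ∉ W) ∧ b = g u := by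
    intro b hb
    rcases hb with rfl | hb
    · exact ⟨v, ⟨hvX, hvW⟩, rfl⟩
    · rcases List.mem_map.mp hb with ⟨u, hu, rfl⟩
      exact ⟨u, (hul u).mp hu, rfl⟩
  have hWcomp : ∀ b, (b = g v ∨ b ∈ ul.map g) →
      W ⊆ modSet sat {b} ∧ b ∉ relC rel Γ ∧ W ⊆ modSet sat {neg b} := by
    intro b hb
    obtain ⟨u, ⟨huX, huW⟩, rfl⟩ := hcomp b hb
    obtain ⟨hSgm, hsat⟩ := hg u huX huW
    have h1 : W ⊆ modSet sat {g u} := by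
      rw [hWdefn, ← hSg]; exact modSet_subset_of_mem sat hSgm
    have h2 : g u ∉ relC rel Γ := by
      intro hmem
      apply hsat
      have hsub : modSet sat (hPrev sat neg rel Γ n₀) ⊆ modSet sat {g u} :=
        (modSet_hPrev_anti sat neg rel Γ (Nat.zero_le n₀)).trans
          (modSet_subset_of_mem sat (Set.mem_union_right _ hmem))
      exact (mem_modSet_singleton sat).mp (hsub huX)
    exact ⟨h1, h2, hWneg _ h2 h1⟩
  have hWτ : W ⊆ modSet sat {τ} := by
    intro w hw
    exact mem_foldr_conj hA3 ((hWcomp (g v) (Or.inl rfl)).1 hw)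
      (fun b hb => (hWcomp b (Or.inr hb)).1 hw)
  have hWnτ : W ⊆ modSet sat {neg τ} :=
    ((hWcomp (g v) (Or.inl rfl)).2.2).trans
      (subset_neg_foldr hA3 (g v) (ul.map g) (Or.inl rfl))
  have hXτW : modSet sat (hPrev sat neg rel Γ n₀) ∩ modSet sat {τ} ⊆ W := by
    rintro u ⟨huX, huτ⟩
    by_contra huW
    have hu : u ∈ ul := (hul u).mpr ⟨huX, huW⟩
    have hsub : modSet sat {τ} ⊆ modSet sat {g u} :=
      foldr_conj_subset hA3 _ _ (Or.inr (List.mem_map_of_mem (f := g) hu))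
    exact (hg u huX huW).2 ((mem_modSet_singleton sat).mp (hsub huτ))
  have hτX : ¬ modSet sat (hPrev sat neg rel Γ n₀) ⊆ modSet sat {τ} := by
    intro hcon2
    have hsub : modSet sat {τ} ⊆ modSet sat {g v} := foldr_conj_subset hA3 _ _ (Or.inl rfl)
    exact (hg v hvX hvW).2 ((mem_modSet_singleton sat).mp (hsub (hcon2 hvX)))
  have hnτX : ¬ modSet sat (hPrev sat neg rel Γ n₀) ⊆ modSet sat {neg τ} := by
    intro hcon2
    have hτrel : neg τ ∉ relC rel Γ := by
      intro hmem
      apply ((hrepr Γ (neg τ)).mp hmem).2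
      rw [(hA3 τ τ).2.2.1]
      exact hWτ
    have hfix := fixed_point sat neg rel hstab
      (show neg τ ∈ cnsq sat (hPrev sat neg rel Γ n₀) from hcon2) hτrel
    apply hτX
    have h2 : modSet sat {neg (neg τ)} = modSet sat {τ} := (hA3 τ τ).2.2.1
    rw [mem_cnsq, h2] at hfix
    exact hfix
  exact hA2 (hPrev sat neg rel Γ n₀) τ hτX hnτX (hXτW.trans hWnτ)

end Forward
section Assemble

variable {F V : Type*} {sat : V → F → Prop} {neg : F → F} {disj conj : F → F → F}
  {rel : Set F → F → Prop}

lemma xset_congr (h0 : cond0 sat rel) {Γ Δ : Set F} (h : modSet sat Γ = modSet sat Δ) :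
    modSet sat (Γ ∪ relC rel Γ ∪ hSet sat neg rel Γ) =
      modSet sat (Δ ∪ relC rel Δ ∪ hSet sat neg rel Δ) := by
  have hrel : relC rel Γ = relC rel Δ := h0 Γ Δ (cnsq_congr sat h)
  have key : ∀ n, modSet sat (hPrev sat neg rel Γ n) = modSet sat (hPrev sat neg rel Δ n) := by
    intro n
    induction n with
    | zero =>
      show modSet sat (Γ ∪ relC rel Γ) = modSet sat (Δ ∪ relC rel Δ)
      rw [modSet_union, modSet_union, h, hrel]
    | succ n ih =>
      have hstep : hStep sat neg rel Γ (hPrev sat neg rel Γ n) =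
          hStep sat neg rel Δ (hPrev sat neg rel Δ n) := by
        unfold hStep
        rw [cnsq_congr sat ih, hrel]
      rw [modSet_hPrev_succ, modSet_hPrev_succ, ih, hstep]
  rw [modSet_total_eq_iInter, modSet_total_eq_iInter]
  exact Set.iInter_congr key

lemma mu_subset_hPrev (μ : Set V → Set V)
    (hch : ∀ A ∈ defFam sat, μ A ⊆ A)
    (hrepr : ∀ (Γ : Set F) (α : F), rel Γ α ↔
      (μ (modSet sat Γ) ⊆ modSet sat {α} ∧ ¬ μ (modSet sat Γ) ⊆ modSet sat {neg α}))
    (Γ : Set F) (n : ℕ) :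
    μ (modSet sat Γ) ⊆ modSet sat (hPrev sat neg rel Γ n) := by
  have hWneg : ∀ φ, φ ∉ relC rel Γ → μ (modSet sat Γ) ⊆ modSet sat {φ} →
      μ (modSet sat Γ) ⊆ modSet sat {neg φ} := by
    intro φ h1 h2
    by_contra h3
    exact h1 ((hrepr Γ φ).mpr ⟨h2, h3⟩)
  induction n with
  | zero =>
    intro w hw φ hφ
    rcases hφ with hφ | hφ
    · exact hch _ ⟨Γ, rfl⟩ hw φ hφ
    · exact (mem_modSet_singleton sat).mp (((hrepr Γ φ).mp hφ).1 hw)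
  | succ n ih =>
    rw [modSet_hPrev_succ]
    intro w hw
    refine ⟨ih hw, ?_⟩
    rw [modSet_hStep]
    intro β h1 h2 _
    exact hWneg β h2 (ih.trans h1) hw

lemma sc_lemma (h9 : cond9 sat neg rel) (ΓA ΓB : Set F) :
    modSet sat (ΓB ∪ relC rel ΓB ∪ hSet sat neg rel ΓB) ∩ modSet sat ΓA ⊆
      modSet sat (ΓA ∪ relC rel ΓA ∪ hSet sat neg rel ΓA) := by
  intro v hv
  have hvmem : v ∈ modSet sat (ΓB ∪ relC rel ΓB ∪ hSet sat neg rel ΓB ∪ ΓA) := by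
    rw [modSet_union]
    exact hv
  intro φ hφ
  rcases hφ with hφ | hφ
  · rcases hφ with hφ | hφ
    · exact hv.2 φ hφ
    · exact (mem_modSet_singleton sat).mp ((h9 ΓA ΓB (Or.inl hφ)) hvmem)
  · exact (mem_modSet_singleton sat).mp ((h9 ΓA ΓB (Or.inr hφ)) hvmem)

end Assemble
/-- Under `(A3)`, `(A1)`, and `(A2)`, `|~` is a definability preserving
pivotal-discriminative consequence relation iff it satisfies `(|~0)`, `(|~6)`, `(|~7)`,
`(|~8)`, and `(|~9)`. -/
theorem stmt11 {F V : Type*} (neg : F → F) (disj conj : F → F → F)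
    (sat : V → F → Prop)
    (hA3 : assumpA3 sat neg disj conj) (hA1 : Finite V)
    (hA2 : assumpA2 sat neg)
    (rel : Set F → F → Prop) :
    (∃ μ : Set V → Set V,
        (∀ A ∈ defFam sat, μ A ⊆ A) ∧
        (∀ A ∈ defFam sat, ∀ B ∈ defFam sat, μ B ∩ A ⊆ μ A) ∧
        (∀ A ∈ defFam sat, μ A ∈ defFam sat) ∧
        (∀ (Γ : Set F) (α : F), rel Γ α ↔
          (μ (modSet sat Γ) ⊆ modSet sat {α} ∧
            ¬ μ (modSet sat Γ) ⊆ modSet sat {neg α}))) ↔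
      (cond0 sat rel ∧ cond6 sat neg rel ∧ cond7 sat neg disj rel ∧
        cond8 sat neg rel ∧ cond9 sat neg rel) := by
  haveI : Finite V := hA1
  constructor
  · rintro ⟨μ, hch, hsc, hdp, hrepr⟩
    have hWY : ∀ Γ : Set F, μ (modSet sat Γ) ⊆ modSet sat (Γ ∪ relC rel Γ) := by
      intro Γ
      rw [modSet_union]
      intro w hw
      exact ⟨hch _ ⟨Γ, rfl⟩ hw,
        fun φ hφ => (mem_modSet_singleton sat).mp (((hrepr Γ φ).mp hφ).1 hw)⟩
    have hWneg : ∀ (Γ : Set F) (φ : F), φ ∉ relC rel Γ →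
        μ (modSet sat Γ) ⊆ modSet sat {φ} → μ (modSet sat Γ) ⊆ modSet sat {neg φ} := by
      intro Γ φ h1 h2
      by_contra h3
      exact h1 ((hrepr Γ φ).mpr ⟨h2, h3⟩)
    refine ⟨?_, ?_, ?_, ?_, ?_⟩
    · -- cond0
      intro Γ Δ hc
      have hM : modSet sat Γ = modSet sat Δ := modSet_eq_of_cnsq_eq sat hc
      ext α
      show rel Γ α ↔ rel Δ α
      rw [hrepr, hrepr, hM]
    · -- cond6
      intro Γ α β h1 h2 h3 hα
      have hWnβ := hWneg Γ β h2 ((hWY Γ).trans h1)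
      have hWsub : μ (modSet sat Γ) ⊆ modSet sat (Γ ∪ relC rel Γ ∪ {neg β}) := by
        rw [modSet_union]
        exact Set.subset_inter (hWY Γ) hWnβ
      exact ((hrepr Γ α).mp hα).2 (hWsub.trans h3)
    · -- cond7
      intro Γ α β h1 h2 h3 h4 hd
      have hWnα := hWneg Γ α h2 ((hWY Γ).trans h1)
      have hWβ : μ (modSet sat Γ) ⊆ modSet sat {β} := by
        refine (Set.subset_inter (hWY Γ) hWnα).trans ?_
        rw [← modSet_union]
        exact h3
      have hWnβ := hWneg Γ β h4 hWβ
      apply ((hrepr Γ (disj α β)).mp hd).2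
      rw [(hA3 α β).2.2.2.1, (hA3 (neg α) (neg β)).2.1]
      exact Set.subset_inter hWnα hWnβ
    · -- cond8
      intro Γ α hα hcon
      exact ((hrepr Γ α).mp hα).2 ((hWY Γ).trans hcon)
    · -- cond9
      intro Γ Δ φ hφ
      rw [mem_cnsq, modSet_union, forward_main hA3 hA2 μ hch hdp hrepr Δ]
      have hsc' : μ (modSet sat Δ) ∩ modSet sat Γ ⊆ μ (modSet sat Γ) :=
        hsc _ ⟨Γ, rfl⟩ _ ⟨Δ, rfl⟩
      refine hsc'.trans ?_
      rcases hφ with hφ | hφ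
      · exact ((hrepr Γ φ).mp hφ).1
      · obtain ⟨n, hn⟩ := Set.mem_iUnion.mp hφ
        obtain ⟨β, rfl, hb1, hb2, _⟩ := hn
        exact hWneg Γ β hb2 ((mu_subset_hPrev μ hch hrepr Γ n).trans hb1)
  · rintro ⟨h0, h6, h7, h8, h9⟩
    classical
    refine ⟨fun S => if h : S ∈ defFam sat then
      modSet sat (h.choose ∪ relC rel h.choose ∪ hSet sat neg rel h.choose) else ∅,
      ?_, ?_, ?_, ?_⟩
    · intro A hA
      beta_reduce
      rw [dif_pos hA]
      calc modSet sat (hA.choose ∪ relC rel hA.choose ∪ hSet sat neg rel hA.choose)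
          ⊆ modSet sat hA.choose :=
            modSet_anti sat (Set.Subset.trans Set.subset_union_left Set.subset_union_left)
        _ = A := hA.choose_spec
    · intro A hA B hB
      beta_reduce
      rw [dif_pos hA, dif_pos hB]
      have hkey := sc_lemma h9 hA.choose hB.choose
      rw [hA.choose_spec] at hkey
      exact hkey
    · intro A hA
      beta_reduce
      rw [dif_pos hA]
      exact ⟨_, rfl⟩
    · intro Γ α
      have hA : modSet sat Γ ∈ defFam sat := ⟨Γ, rfl⟩
      beta_reduce
      rw [dif_pos hA,
        xset_congr (neg := neg) h0 (hA.choose_spec : modSet sat hA.choose = modSet sat Γ)]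
      exact back_repr hA3 h6 h7 h8 Γ α
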